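/- Let Ω = Σ_{i=1}^n ξ_i ∧ J(ξ̄_i) be the standard (2,0)-form associated to a quaternionic Hermitian metric on a quaternionic vector space of real dimension 4n. Then for any (1,0)-vectors x_1, ..., x_n orthogonal with respect to the metric, (1/n!)·Ω^n(x_1, J(x̄_1), ..., x_n, J(x̄_n)) = Π_i q(x_i, x̄_i) ≥ 0; hence Ω^n is weakly positive. -/

import Mathlib

/-!
STATEMENT 7.  Let `(V, I, J, K, q)` be a quaternionic Hermitian vector space of real
dimension `4n`, encoded by its `(1,0)`-space `V` (complex dimension `2n`), the
antilinear map `J` and the positive definite quaternionic Hermitian metric, given on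
`(1,0)`-vectors by the Hermitian form `h x y = q(x, ȳ)` (with quaternionic invariance
`h (Jx) (Jy) = h y x`).  The standard `(2,0)`-form `Ω = ω_J + √-1 ω_K = Σ ξ_i ∧ J(ξ̄_i)`
is characterized by `Ω(x, J(ȳ)) = q(x, ȳ)`, i.e. `Ω x y = -h x (J y)`.

Then for `(1,0)`-vectors `x₁, …, x_n` pairwise orthogonal with respect to the metric,
`(1/n!) Ω^n (x₁, J(x̄₁), …, x_n, J(x̄_n)) = Π_i q(x_i, x̄_i) ≥ 0`;
hence `Ω^n` is weakly positive.
-/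

noncomputable section

open scoped BigOperators

variable {V : Type*}

/-- Wedge product of `ℂ`-valued alternating forms (encoded as plain functions),
via antisymmetrization (shuffle convention). -/
def wedgeFun (V : Type*) (a b : ℕ)
    (f : (Fin a → V) → ℂ) (g : (Fin b → V) → ℂ) : (Fin (a + b) → V) → ℂ :=
  fun v =>
    (((a.factorial * b.factorial : ℕ) : ℂ))⁻¹ *
      ∑ σ : Equiv.Perm (Fin (a + b)),
        ((Equiv.Perm.sign σ : ℤ) : ℂ) *
          f (fun i => v (σ (Fin.castAdd b i))) * g (fun i => v (σ (Fin.natAdd a i)))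

/-- `n`-th wedge power of a 2-form. -/
def powFun (V : Type*) (f : (Fin 2 → V) → ℂ) : (n : ℕ) → (Fin (2 * n) → V) → ℂ
  | 0 => fun _ => 1
  | n + 1 => fun v =>
      wedgeFun V (2 * n) 2 (powFun V f n) f
        (fun i => v (Fin.cast (by ring) i))

/-- The tuple `(x₁, J(x̄₁), x₂, J(x̄₂), …, x_m, J(x̄_m))` (under the identification of
`T^{1,0}` with `V`, the vector `J(x̄)` corresponds to `J x`). -/
def tupleJ (J : V → V) (m : ℕ) (x : Fin m → V) : Fin (2 * m) → V :=
  fun i =>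
    if i.val % 2 = 0 then x ⟨i.val / 2, by have := i.isLt; omega⟩
    else J (x ⟨i.val / 2, by have := i.isLt; omega⟩)

def pr2 (n : ℕ) (i : Fin n) (j : Fin 2) : Fin (2 * n) :=
  ⟨2 * i.val + j.val, by have := i.isLt; have := j.isLt; omega⟩
def Sform (B : V → V → ℂ) (n : ℕ) (v : Fin (2 * n) → V) : ℂ :=
  ∑ σ : Equiv.Perm (Fin (2 * n)),
    ((Equiv.Perm.sign σ : ℤ) : ℂ) *
      ∏ i : Fin n, B (v (σ (pr2 n i 0))) (v (σ (pr2 n i 1)))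
lemma sform_zero_of_eq (B : V → V → ℂ) (n : ℕ) (v : Fin (2 * n) → V)
    (a b : Fin (2 * n)) (hab : a ≠ b) (hv : v a = v b) : Sform B n v = 0 := by
  have key : ∀ m, v (Equiv.swap a b m) = v m := by
    intro m
    rcases eq_or_ne m a with rfl | hma
    · rw [Equiv.swap_apply_left]; exact hv.symm
    rcases eq_or_ne m b with rfl | hmb
    · rw [Equiv.swap_apply_right]; exact hv
    · rw [Equiv.swap_apply_of_ne_of_ne hma hmb]
  have h2 : Sform B n v = - Sform B n v := by
    conv_lhs => rw [Sform,
      ← Equiv.sum_comp (Equiv.mulLeft (Equiv.swap a b))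
        (fun σ : Equiv.Perm (Fin (2 * n)) =>
          ((Equiv.Perm.sign σ : ℤ) : ℂ) *
            ∏ i : Fin n, B (v (σ (pr2 n i 0))) (v (σ (pr2 n i 1))))]
    rw [Sform, ← Finset.sum_neg_distrib]
    apply Finset.sum_congr rfl
    intro σ _
    have hsign : ((Equiv.Perm.sign (Equiv.mulLeft (Equiv.swap a b) σ) : ℤ) : ℂ)
        = - ((Equiv.Perm.sign σ : ℤ) : ℂ) := by
      have : Equiv.Perm.sign (Equiv.swap a b * σ)
          = Equiv.Perm.sign (Equiv.swap a b) * Equiv.Perm.sign σ := by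
        simp [Equiv.Perm.sign_mul]
      simp only [Equiv.coe_mulLeft] at *
      rw [this, Equiv.Perm.sign_swap hab]
      push_cast
      ring
    have hprod : (∏ i : Fin n, B (v ((Equiv.mulLeft (Equiv.swap a b) σ) (pr2 n i 0)))
          (v ((Equiv.mulLeft (Equiv.swap a b) σ) (pr2 n i 1))))
        = ∏ i : Fin n, B (v (σ (pr2 n i 0))) (v (σ (pr2 n i 1))) := by
      apply Finset.prod_congr rfl
      intro i _
      simp only [Equiv.coe_mulLeft, Equiv.Perm.mul_apply, key]
    rw [hsign, hprod]
    ring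
  linear_combination h2 / 2

lemma sform_factor (B : V → V → ℂ) (n : ℕ) (v : Fin (2 * n) → V) (k : Fin (2 * n))
    (σ : Equiv.Perm (Fin (2 * n))) :
    ∃ (a : V) (lr : Bool) (C : ℂ), ∀ z : V,
      (∏ i : Fin n, B ((Function.update v k z) (σ (pr2 n i 0)))
        ((Function.update v k z) (σ (pr2 n i 1)))) =
      (if lr then B z a else B a z) * C := by
  set m : Fin (2 * n) := σ.symm k with hm
  have hmk : σ m = k := σ.apply_symm_apply k
  have hn : m.val < 2 * n := m.isLt
  set i0 : Fin n := ⟨m.val / 2, by omega⟩ with hi0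
  have hne : ∀ (i : Fin n) (j : Fin 2), i ≠ i0 → σ (pr2 n i j) ≠ k := by
    intro i j hi h
    apply hi
    have : pr2 n i j = m := by
      rw [hm]; rw [← h]; exact (Equiv.symm_apply_apply σ _).symm
    have hv : 2 * i.val + j.val = m.val := congrArg Fin.val this
    have := j.isLt
    apply Fin.ext
    simp only [hi0]
    omega
  have hupd : ∀ (z : V) (i : Fin n) (j : Fin 2), i ≠ i0 →
      (Function.update v k z) (σ (pr2 n i j)) = v (σ (pr2 n i j)) := by
    intro z i j hi
    exact Function.update_of_ne (hne i j hi) _ _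
  set C : ℂ := ∏ i ∈ Finset.univ.erase i0, B (v (σ (pr2 n i 0))) (v (σ (pr2 n i 1))) with hC
  have hsplit : ∀ z : V,
      (∏ i : Fin n, B ((Function.update v k z) (σ (pr2 n i 0)))
        ((Function.update v k z) (σ (pr2 n i 1)))) =
      B ((Function.update v k z) (σ (pr2 n i0 0)))
        ((Function.update v k z) (σ (pr2 n i0 1))) * C := by
    intro z
    rw [← Finset.mul_prod_erase Finset.univ _ (Finset.mem_univ i0)]
    congr 1
    apply Finset.prod_congr rfl
    intro i hi
    rw [hupd z i 0 (Finset.ne_of_mem_erase hi), hupd z i 1 (Finset.ne_of_mem_erase hi)]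
  by_cases hpar : m.val % 2 = 0
  · -- slot 0 of pair i0 is k
    have h0 : pr2 n i0 0 = m := by apply Fin.ext; simp only [pr2, hi0]; omega
    have h1 : σ (pr2 n i0 1) ≠ k := by
      intro h
      have : pr2 n i0 1 = m := by
        rw [hm, ← h]; exact (Equiv.symm_apply_apply σ _).symm
      have := congrArg Fin.val this
      simp only [pr2, hi0] at this
      omega
    refine ⟨v (σ (pr2 n i0 1)), true, C, fun z => ?_⟩
    rw [hsplit z, if_pos rfl]
    congr 1
    rw [h0, hmk, Function.update_self, Function.update_of_ne h1]
  · -- slot 1 of pair i0 is k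
    have h0 : pr2 n i0 1 = m := by apply Fin.ext; simp only [pr2, hi0]; omega
    have h1 : σ (pr2 n i0 0) ≠ k := by
      intro h
      have : pr2 n i0 0 = m := by
        rw [hm, ← h]; exact (Equiv.symm_apply_apply σ _).symm
      have := congrArg Fin.val this
      simp only [pr2, hi0] at this
      omega
    refine ⟨v (σ (pr2 n i0 0)), false, C, fun z => ?_⟩
    rw [hsplit z, if_neg (by simp)]
    congr 1
    rw [h0, hmk, Function.update_self, Function.update_of_ne h1]
lemma sform_add [AddCommGroup V] (B : V → V → ℂ)
    (hBa1 : ∀ x x' y, B (x + x') y = B x y + B x' y)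
    (hBa2 : ∀ x y y', B x (y + y') = B x y + B x y')
    (n : ℕ) (v : Fin (2 * n) → V) (k : Fin (2 * n)) (u w : V) :
    Sform B n (Function.update v k (u + w)) =
      Sform B n (Function.update v k u) + Sform B n (Function.update v k w) := by
  unfold Sform
  rw [← Finset.sum_add_distrib]
  apply Finset.sum_congr rfl
  intro σ _
  obtain ⟨a, lr, C, hC⟩ := sform_factor B n v k σ
  rw [hC, hC, hC]
  cases lr
  · simp only [if_neg Bool.false_ne_true, hBa2]; ring
  · simp only [if_true, reduceIte, hBa1]; ring
lemma sform_smul [AddCommGroup V] [Module ℂ V] (B : V → V → ℂ)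
    (hBs1 : ∀ (c : ℂ) x y, B (c • x) y = c * B x y)
    (hBs2 : ∀ (c : ℂ) x y, B x (c • y) = c * B x y)
    (n : ℕ) (v : Fin (2 * n) → V) (k : Fin (2 * n)) (c : ℂ) (u : V) :
    Sform B n (Function.update v k (c • u)) = c * Sform B n (Function.update v k u) := by
  unfold Sform
  rw [Finset.mul_sum]
  apply Finset.sum_congr rfl
  intro σ _
  obtain ⟨a, lr, C, hC⟩ := sform_factor B n v k σ
  rw [hC, hC]
  cases lr
  · simp only [if_neg Bool.false_ne_true, hBs2]; ring
  · simp only [if_true, reduceIte, hBs1]; ring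

lemma perm2_cases : ∀ u : Equiv.Perm (Fin 2), u = 1 ∨ u = Equiv.swap 0 1 := by decide

/-- The pairing equivalence `Fin n × Fin 2 ≃ Fin (2*n)`. -/
def pairEquiv (n : ℕ) : (Fin n × Fin 2) ≃ Fin (2 * n) where
  toFun p := pr2 n p.1 p.2
  invFun a := (⟨a.val / 2, by have := a.isLt; omega⟩, ⟨a.val % 2, by omega⟩)
  left_inv := by
    rintro ⟨i, j⟩
    have := j.isLt
    have h : (pr2 n i j).val = 2 * i.val + j.val := rfl
    apply Prod.ext <;> apply Fin.ext <;> simp [h] <;> omega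
  right_inv := by
    intro a
    apply Fin.ext
    show 2 * (a.val / 2) + a.val % 2 = a.val
    omega

/-- The pair-respecting permutation associated to `(π, s)`. -/
def pairPerm (n : ℕ) (π : Equiv.Perm (Fin n)) (s : Fin n → Equiv.Perm (Fin 2)) :
    Equiv.Perm (Fin (2 * n)) :=
  (pairEquiv n).permCongr
    (Equiv.prodCongrLeft (fun _ : Fin 2 => π) * Equiv.prodCongrRight s)
lemma pairPerm_apply (n : ℕ) (π : Equiv.Perm (Fin n)) (s : Fin n → Equiv.Perm (Fin 2))
    (i : Fin n) (j : Fin 2) :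
    pairPerm n π s (pr2 n i j) = pr2 n (π i) (s i j) := by
  have h1 : (pairEquiv n).symm (pr2 n i j) = (i, j) :=
    (pairEquiv n).left_inv (i, j)
  show (pairEquiv n) ((Equiv.prodCongrLeft (fun _ : Fin 2 => π) * Equiv.prodCongrRight s)
      ((pairEquiv n).symm (pr2 n i j))) = _
  rw [h1]
  rfl
lemma pairPerm_sign (n : ℕ) (π : Equiv.Perm (Fin n)) (s : Fin n → Equiv.Perm (Fin 2)) :
    Equiv.Perm.sign (pairPerm n π s) = ∏ i, Equiv.Perm.sign (s i) := by
  unfold pairPerm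
  rw [Equiv.Perm.sign_permCongr, Equiv.Perm.sign_mul, Equiv.Perm.sign_prodCongrLeft,
    Equiv.Perm.sign_prodCongrRight]
  simp [Int.units_mul_self]
lemma pairPerm_injective (n : ℕ) :
    Function.Injective (fun p : Equiv.Perm (Fin n) × (Fin n → Equiv.Perm (Fin 2)) =>
      pairPerm n p.1 p.2) := by
  rintro ⟨π, s⟩ ⟨π', s'⟩ hE
  simp only at hE
  have key : ∀ (i : Fin n) (j : Fin 2), π i = π' i ∧ s i j = s' i j := by
    intro i j
    have := congrArg (fun (σ : Equiv.Perm (Fin (2*n))) => σ (pr2 n i j)) hE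
    simp only [pairPerm_apply] at this
    have hval : 2 * (π i).val + (s i j).val = 2 * (π' i).val + (s' i j).val :=
      congrArg Fin.val this
    have h1 := (s i j).isLt
    have h2 := (s' i j).isLt
    constructor
    · apply Fin.ext; omega
    · apply Fin.ext; omega
  refine Prod.ext ?_ ?_
  · exact Equiv.ext fun i => (key i 0).1
  · funext i; exact Equiv.ext fun j => (key i j).2
lemma sform_orth (B : V → V → ℂ) (n : ℕ) (v : Fin (2 * n) → V) (g : Fin n → ℂ)
    (hz : ∀ a b : Fin (2 * n), (a.val / 2 ≠ b.val / 2 ∨ a.val % 2 = b.val % 2) →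
      B (v a) (v b) = 0)
    (hp0 : ∀ i, B (v (pr2 n i 0)) (v (pr2 n i 1)) = g i)
    (hp1 : ∀ i, B (v (pr2 n i 1)) (v (pr2 n i 0)) = - g i) :
    Sform B n v = ((2 ^ n * n.factorial : ℕ) : ℂ) * ∏ i, g i := by
  classical
  set f : Equiv.Perm (Fin (2 * n)) → ℂ := fun σ =>
    ((Equiv.Perm.sign σ : ℤ) : ℂ) *
      ∏ i : Fin n, B (v (σ (pr2 n i 0))) (v (σ (pr2 n i 1))) with hf
  have hval : ∀ (π : Equiv.Perm (Fin n)) (s : Fin n → Equiv.Perm (Fin 2)),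
      f (pairPerm n π s) = ∏ j, g j := by
    intro π s
    have hterm : ∀ i : Fin n,
        ((Equiv.Perm.sign (s i) : ℤ) : ℂ) *
          B (v (pr2 n (π i) (s i 0))) (v (pr2 n (π i) (s i 1))) = g (π i) := by
      intro i
      rcases perm2_cases (s i) with hcase | hcase <;> rw [hcase]
      · simp only [Equiv.Perm.sign_one, Equiv.Perm.one_apply]
        rw [hp0]
        push_cast
        ring
      · have h01 : Equiv.swap (0 : Fin 2) 1 0 = 1 := by decide
        have h10 : Equiv.swap (0 : Fin 2) 1 1 = 0 := by decide
        rw [Equiv.Perm.sign_swap (by decide), h01, h10, hp1]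
        push_cast
        ring
    have hcast : (((∏ i, Equiv.Perm.sign (s i) : ℤˣ) : ℤ) : ℂ)
        = ∏ i, ((Equiv.Perm.sign (s i) : ℤ) : ℂ) := by
      push_cast
      rfl
    rw [hf]
    simp only [pairPerm_apply, pairPerm_sign]
    rw [hcast, ← Finset.prod_mul_distrib]
    rw [Finset.prod_congr rfl (fun i _ => hterm i)]
    exact Equiv.prod_comp π g
  have hrec : ∀ σ, f σ ≠ 0 →
      ∃ p : Equiv.Perm (Fin n) × (Fin n → Equiv.Perm (Fin 2)),
        pairPerm n p.1 p.2 = σ := by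
    intro σ hσ
    have hfac : ∀ i, B (v (σ (pr2 n i 0))) (v (σ (pr2 n i 1))) ≠ 0 := by
      intro i hzero
      apply hσ
      rw [hf]
      simp only
      rw [Finset.prod_eq_zero (Finset.mem_univ i) hzero, mul_zero]
    have hpair : ∀ i, (σ (pr2 n i 0)).val / 2 = (σ (pr2 n i 1)).val / 2 ∧
        (σ (pr2 n i 0)).val % 2 ≠ (σ (pr2 n i 1)).val % 2 := by
      intro i
      by_contra hcon
      refine hfac i (hz _ _ ?_)
      tauto
    let π0 : Fin n → Fin n := fun i =>
      ⟨(σ (pr2 n i 0)).val / 2, by have := (σ (pr2 n i 0)).isLt; omega⟩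
    have hπ0inj : Function.Injective π0 := by
      intro i i' hii
      have hdiv : (σ (pr2 n i 0)).val / 2 = (σ (pr2 n i' 0)).val / 2 :=
        congrArg Fin.val hii
      by_cases heq : σ (pr2 n i 0) = σ (pr2 n i' 0)
      · have h2 := congrArg Fin.val (σ.injective heq)
        have h3 : 2 * i.val + 0 = 2 * i'.val + 0 := h2
        exact Fin.ext (by omega)
      · have hne : (σ (pr2 n i 0)).val ≠ (σ (pr2 n i' 0)).val :=
          fun hh => heq (Fin.ext hh)
        have h1 := hpair i'
        have h4 : σ (pr2 n i' 1) = σ (pr2 n i 0) := by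
          apply Fin.ext
          omega
        have h5 := congrArg Fin.val (σ.injective h4)
        have h6 : 2 * i'.val + 1 = 2 * i.val + 0 := h5
        exact absurd h6 (by omega)
    let π : Equiv.Perm (Fin n) :=
      Equiv.ofBijective π0 (Finite.injective_iff_bijective.mp hπ0inj)
    let s : Fin n → Equiv.Perm (Fin 2) := fun i =>
      if (σ (pr2 n i 0)).val % 2 = 0 then 1 else Equiv.swap 0 1
    refine ⟨(π, s), ?_⟩
    apply Equiv.ext
    intro a
    obtain ⟨i, j, rfl⟩ : ∃ i j, pr2 n i j = a :=
      ⟨⟨a.val / 2, by have := a.isLt; omega⟩, ⟨a.val % 2, by omega⟩,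
        Fin.ext (by show 2 * (a.val / 2) + a.val % 2 = a.val; omega)⟩
    show pairPerm n π s (pr2 n i j) = σ (pr2 n i j)
    rw [pairPerm_apply]
    have hπ : π i = π0 i := rfl
    have h0 := hpair i
    have hb1 := (σ (pr2 n i 0)).isLt
    have hb2 := (σ (pr2 n i 1)).isLt
    have h01 : Equiv.swap (0 : Fin 2) 1 0 = 1 := by decide
    have h10 : Equiv.swap (0 : Fin 2) 1 1 = 0 := by decide
    by_cases hc : (σ (pr2 n i 0)).val % 2 = 0
    · have hs : s i = 1 := if_pos hc
      rcases (by omega : j.val = 0 ∨ j.val = 1) with hj | hj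
      · have hj0 : j = 0 := Fin.ext hj
        subst hj0
        apply Fin.ext
        have hv1 : (s i (0 : Fin 2)).val = 0 := by rw [hs]; rfl
        show 2 * (π i).val + (s i 0).val = (σ (pr2 n i 0)).val
        rw [hv1]
        show 2 * ((σ (pr2 n i 0)).val / 2) + 0 = (σ (pr2 n i 0)).val
        omega
      · have hj0 : j = 1 := Fin.ext hj
        subst hj0
        apply Fin.ext
        have hv1 : (s i (1 : Fin 2)).val = 1 := by rw [hs]; rfl
        show 2 * (π i).val + (s i 1).val = (σ (pr2 n i 1)).val
        rw [hv1]
        show 2 * ((σ (pr2 n i 0)).val / 2) + 1 = (σ (pr2 n i 1)).val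
        omega
    · have hs : s i = Equiv.swap 0 1 := if_neg hc
      rcases (by omega : j.val = 0 ∨ j.val = 1) with hj | hj
      · have hj0 : j = 0 := Fin.ext hj
        subst hj0
        apply Fin.ext
        have hv1 : (s i (0 : Fin 2)).val = 1 := by rw [hs]; rfl
        show 2 * (π i).val + (s i 0).val = (σ (pr2 n i 0)).val
        rw [hv1]
        show 2 * ((σ (pr2 n i 0)).val / 2) + 1 = (σ (pr2 n i 0)).val
        omega
      · have hj0 : j = 1 := Fin.ext hj
        subst hj0
        apply Fin.ext
        have hv1 : (s i (1 : Fin 2)).val = 0 := by rw [hs]; rfl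
        show 2 * (π i).val + (s i 1).val = (σ (pr2 n i 1)).val
        rw [hv1]
        show 2 * ((σ (pr2 n i 0)).val / 2) + 0 = (σ (pr2 n i 1)).val
        omega
  have hsum : Sform B n v =
      ∑ _p : Equiv.Perm (Fin n) × (Fin n → Equiv.Perm (Fin 2)), ∏ j, g j := by
    rw [Sform]
    refine Finset.sum_bij_ne_zero (fun σ _ h₂ => (hrec σ h₂).choose)
      (fun _ _ _ => Finset.mem_univ _) ?_ ?_ ?_
    · intro σ₁ h11 h12 σ₂ h21 h22 heq
      have e1 := (hrec σ₁ h12).choose_spec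
      have e2 := (hrec σ₂ h22).choose_spec
      have heq' : (hrec σ₁ h12).choose = (hrec σ₂ h22).choose := heq
      rw [← e1, ← e2, heq']
    · intro p _ hp
      have h₂ : f (pairPerm n p.1 p.2) ≠ 0 := by
        rw [hval p.1 p.2]; exact hp
      refine ⟨pairPerm n p.1 p.2, Finset.mem_univ _, h₂, ?_⟩
      exact pairPerm_injective n ((hrec (pairPerm n p.1 p.2) h₂).choose_spec)
    · intro σ _ h₂
      have e1 := (hrec σ h₂).choose_spec
      show f σ = _
      rw [← e1, hval]
  rw [hsum, Finset.sum_const, Finset.card_univ, Fintype.card_prod, Fintype.card_perm,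
    Fintype.card_fun, Fintype.card_perm, Fintype.card_fin, Fintype.card_fin]
  rw [nsmul_eq_mul]
  push_cast [Nat.factorial]
  ring

def permExt (n : ℕ) (τ : Equiv.Perm (Fin (2 * n))) : Equiv.Perm (Fin (2 * n + 2)) :=
  (finSumFinEquiv (m := 2 * n) (n := 2)).permCongr
    (Equiv.sumCongr τ (Equiv.refl (Fin 2)))
lemma permExt_castAdd (n : ℕ) (τ : Equiv.Perm (Fin (2 * n))) (m : Fin (2 * n)) :
    permExt n τ (Fin.castAdd 2 m) = Fin.castAdd 2 (τ m) := by
  unfold permExt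
  rw [← finSumFinEquiv_apply_left, Equiv.permCongr_apply, Equiv.symm_apply_apply]
  rfl
lemma permExt_natAdd (n : ℕ) (τ : Equiv.Perm (Fin (2 * n))) (j : Fin 2) :
    permExt n τ (Fin.natAdd (2 * n) j) = Fin.natAdd (2 * n) j := by
  unfold permExt
  rw [← finSumFinEquiv_apply_right, Equiv.permCongr_apply, Equiv.symm_apply_apply]
  rfl
lemma permExt_sign (n : ℕ) (τ : Equiv.Perm (Fin (2 * n))) :
    Equiv.Perm.sign (permExt n τ) = Equiv.Perm.sign τ := by
  unfold permExt
  rw [Equiv.Perm.sign_permCongr, Equiv.Perm.sign_sumCongr]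
  simp
lemma powFun_eq_sform (Ω : (Fin 2 → V) → ℂ) (B : V → V → ℂ)
    (hΩB : ∀ v : Fin 2 → V, Ω v = B (v 0) (v 1)) (n : ℕ) (v : Fin (2 * n) → V) :
    powFun V Ω n v = (((2 ^ n : ℕ) : ℂ))⁻¹ * Sform B n v := by
  induction n with
  | zero =>
    have h1 : powFun V Ω 0 v = 1 := rfl
    have h2 : Sform B 0 v = 1 := by
      rw [Sform]
      have huniq : ∀ σ : Equiv.Perm (Fin (2 * 0)), σ = 1 :=
        fun σ => Equiv.ext (fun x => absurd x.isLt (by omega))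
      have huniv : (Finset.univ : Finset (Equiv.Perm (Fin (2 * 0)))) = {1} := by
        apply Finset.eq_singleton_iff_unique_mem.mpr
        exact ⟨Finset.mem_univ _, fun σ _ => huniq σ⟩
      rw [huniv, Finset.sum_singleton]
      simp
    rw [h1, h2]
    simp
  | succ n ih =>
    have h2 : 2 * n + 2 = 2 * (n + 1) := by ring
    set w : Fin (2 * n + 2) → V := fun i => v (Fin.cast h2 i) with hw
    have hunfold : powFun V Ω (n + 1) v
        = wedgeFun V (2 * n) 2 (powFun V Ω n) Ω w := rfl
    set H : Equiv.Perm (Fin (2 * n + 2)) → ℂ := fun σ =>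
      ((Equiv.Perm.sign σ : ℤ) : ℂ) *
        (∏ i : Fin n, B (w (σ (Fin.castAdd 2 (pr2 n i 0))))
          (w (σ (Fin.castAdd 2 (pr2 n i 1))))) *
        B (w (σ (Fin.natAdd (2 * n) 0))) (w (σ (Fin.natAdd (2 * n) 1))) with hH
    have Hmul : ∀ (σ : Equiv.Perm (Fin (2 * n + 2))) (τ : Equiv.Perm (Fin (2 * n))),
        H (σ * permExt n τ) =
          ((Equiv.Perm.sign σ : ℤ) : ℂ) * ((Equiv.Perm.sign τ : ℤ) : ℂ) *
            (∏ i : Fin n, B (w (σ (Fin.castAdd 2 (τ (pr2 n i 0)))))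
              (w (σ (Fin.castAdd 2 (τ (pr2 n i 1)))))) *
            B (w (σ (Fin.natAdd (2 * n) 0))) (w (σ (Fin.natAdd (2 * n) 1))) := by
      intro σ τ
      rw [hH]
      simp only [Equiv.Perm.mul_apply, permExt_castAdd, permExt_natAdd,
        Equiv.Perm.sign_mul, permExt_sign]
      push_cast
      ring
    have step1 : ∀ σ : Equiv.Perm (Fin (2 * n + 2)),
        ((Equiv.Perm.sign σ : ℤ) : ℂ) *
            powFun V Ω n (fun i => w (σ (Fin.castAdd 2 i))) *
            Ω (fun i => w (σ (Fin.natAdd (2 * n) i)))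
        = (((2 ^ n : ℕ) : ℂ))⁻¹ * ∑ τ : Equiv.Perm (Fin (2 * n)), H (σ * permExt n τ) := by
      intro σ
      have hR : (∑ τ : Equiv.Perm (Fin (2 * n)), H (σ * permExt n τ))
          = ∑ τ : Equiv.Perm (Fin (2 * n)),
            ((Equiv.Perm.sign σ : ℤ) : ℂ) * ((Equiv.Perm.sign τ : ℤ) : ℂ) *
              (∏ i : Fin n, B (w (σ (Fin.castAdd 2 (τ (pr2 n i 0)))))
                (w (σ (Fin.castAdd 2 (τ (pr2 n i 1)))))) *
              B (w (σ (Fin.natAdd (2 * n) 0))) (w (σ (Fin.natAdd (2 * n) 1))) :=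
        Finset.sum_congr rfl (fun τ _ => Hmul σ τ)
      rw [ih, hΩB, hR, Sform]
      simp only [Finset.mul_sum, Finset.sum_mul]
      exact Finset.sum_congr rfl (fun τ _ => by ring)
    have step2 : ∀ τ : Equiv.Perm (Fin (2 * n)),
        (∑ σ : Equiv.Perm (Fin (2 * n + 2)), H (σ * permExt n τ))
          = ∑ σ : Equiv.Perm (Fin (2 * n + 2)), H σ := by
      intro τ
      exact Equiv.sum_comp (Equiv.mulRight (permExt n τ)) H
    have key2 : (∑ σ : Equiv.Perm (Fin (2 * n + 2)), H σ) = Sform B (n + 1) v := by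
      rw [Sform]
      rw [← Equiv.sum_comp ((finCongr h2).permCongr)
        (fun σ' : Equiv.Perm (Fin (2 * (n + 1))) =>
          ((Equiv.Perm.sign σ' : ℤ) : ℂ) *
            ∏ i : Fin (n + 1), B (v (σ' (pr2 (n + 1) i 0))) (v (σ' (pr2 (n + 1) i 1))))]
      apply Finset.sum_congr rfl
      intro σ _
      have hsgn : Equiv.Perm.sign ((finCongr h2).permCongr σ) = Equiv.Perm.sign σ :=
        Equiv.Perm.sign_permCongr _ _
      have happ : ∀ (i : Fin (n + 1)) (j : Fin 2),
          v (((finCongr h2).permCongr σ) (pr2 (n + 1) i j))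
            = w (σ (Fin.cast h2.symm (pr2 (n + 1) i j))) := by
        intro i j
        rfl
      have hca : ∀ (i : Fin n) (j : Fin 2),
          Fin.cast h2.symm (pr2 (n + 1) i.castSucc j) = Fin.castAdd 2 (pr2 n i j) := by
        intro i j
        apply Fin.ext
        rfl
      have hna : ∀ j : Fin 2,
          Fin.cast h2.symm (pr2 (n + 1) (Fin.last n) j) = Fin.natAdd (2 * n) j := by
        intro j
        apply Fin.ext
        rfl
      simp only [happ]
      rw [hsgn, Fin.prod_univ_castSucc]
      simp only [hca, hna]
      rw [hH]
      ring
    rw [hunfold, wedgeFun]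
    have hsum1 : (∑ σ : Equiv.Perm (Fin (2 * n + 2)),
          ((Equiv.Perm.sign σ : ℤ) : ℂ) *
            powFun V Ω n (fun i => w (σ (Fin.castAdd 2 i))) *
            Ω (fun i => w (σ (Fin.natAdd (2 * n) i))))
        = (((2 ^ n : ℕ) : ℂ))⁻¹ * ((Nat.factorial (2 * n) : ℂ) * Sform B (n + 1) v) := by
      rw [Finset.sum_congr rfl (fun σ _ => step1 σ), ← Finset.mul_sum]
      congr 1
      rw [Finset.sum_comm]
      rw [Finset.sum_congr rfl (fun τ _ => step2 τ)]
      rw [Finset.sum_const, Finset.card_univ, Fintype.card_perm, Fintype.card_fin,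
        nsmul_eq_mul, key2]
    rw [hsum1]
    have hfac : ((Nat.factorial (2 * n) : ℕ) : ℂ) ≠ 0 :=
      Nat.cast_ne_zero.mpr (Nat.factorial_ne_zero _)
    have h2n : (((2 : ℕ) ^ n : ℕ) : ℂ) ≠ 0 := by
      push_cast
      exact pow_ne_zero n two_ne_zero
    rw [Nat.factorial]
    push_cast
    field_simp
    ring

lemma tupleJ_pr0 (J : V → V) (n : ℕ) (y : Fin n → V) (i : Fin n) :
    tupleJ J n y (pr2 n i 0) = y i := by
  show (if (2 * i.val + 0) % 2 = 0 then _ else _) = y i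
  rw [if_pos (by omega)]
  congr 1
  apply Fin.ext
  show (2 * i.val + 0) / 2 = i.val
  omega
lemma tupleJ_pr1 (J : V → V) (n : ℕ) (y : Fin n → V) (i : Fin n) :
    tupleJ J n y (pr2 n i 1) = J (y i) := by
  show (if (2 * i.val + 1) % 2 = 0 then _ else _) = J (y i)
  rw [if_neg (by omega)]
  congr 2
  apply Fin.ext
  show (2 * i.val + 1) / 2 = i.val
  omega
lemma pr2_ne (n : ℕ) {i i' : Fin n} {j j' : Fin 2} (hval : 2 * i.val + j.val ≠ 2 * i'.val + j'.val) :
    pr2 n i j ≠ pr2 n i' j' :=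
  fun hh => hval (congrArg Fin.val hh)
lemma tupleJ_update (J : V → V) (n : ℕ) (y : Fin n → V) (k : Fin n) (z : V) :
    tupleJ J n (Function.update y k z)
      = Function.update (Function.update (tupleJ J n y) (pr2 n k 0) z) (pr2 n k 1) (J z) := by
  funext a
  obtain ⟨i, j, rfl⟩ : ∃ i j, pr2 n i j = a :=
    ⟨⟨a.val / 2, by have := a.isLt; omega⟩, ⟨a.val % 2, by omega⟩,
      Fin.ext (by show 2 * (a.val / 2) + a.val % 2 = a.val; omega)⟩
  have hj := j.isLt
  rcases (by omega : j.val = 0 ∨ j.val = 1) with hj0 | hj0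
  · have : j = 0 := Fin.ext hj0
    subst this
    by_cases hik : i = k
    · subst hik
      rw [tupleJ_pr0, Function.update_self,
        Function.update_of_ne (pr2_ne n (by omega)), Function.update_self]
    · have hik' : i.val ≠ k.val := fun hh => hik (Fin.ext hh)
      rw [tupleJ_pr0, Function.update_of_ne hik,
        Function.update_of_ne (pr2_ne n (by omega)),
        Function.update_of_ne (pr2_ne n (by omega)), tupleJ_pr0]
  · have : j = 1 := Fin.ext hj0
    subst this
    by_cases hik : i = k
    · subst hik
      rw [tupleJ_pr1, Function.update_self, Function.update_self]
    · have hik' : i.val ≠ k.val := fun hh => hik (Fin.ext hh)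
      rw [tupleJ_pr1, Function.update_of_ne hik,
        Function.update_of_ne (pr2_ne n (by omega)),
        Function.update_of_ne (pr2_ne n (by omega)), tupleJ_pr1]

section Elem
variable [AddCommGroup V] [Module ℂ V]
  (B : V → V → ℂ)
  (hBa1 : ∀ x x' y, B (x + x') y = B x y + B x' y)
  (hBa2 : ∀ x y y', B x (y + y') = B x y + B x y')
  (hBs1 : ∀ (c : ℂ) x y, B (c • x) y = c * B x y)
  (hBs2 : ∀ (c : ℂ) x y, B x (c • y) = c * B x y)
  (J : V → V)
  (hJadd : ∀ x y, J (x + y) = J x + J y)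
  (hJsmul : ∀ (c : ℂ) x, J (c • x) = (starRingEnd ℂ) c • J x)
  (hJJ : ∀ x, J (J x) = -x)

include hBa1 hBa2 hBs1 hBs2 hJadd hJsmul hJJ in
lemma sform_elementary (n : ℕ) (y : Fin n → V) (k j : Fin n) (hjk : j ≠ k) (c d : ℂ) :
    Sform B n (tupleJ J n (Function.update y k (y k + c • y j + d • J (y j))))
      = Sform B n (tupleJ J n y) := by
  have hjk' : j.val ≠ k.val := fun hh => hjk (Fin.ext hh)
  set v := tupleJ J n y with hv
  set z := y k + c • y j + d • J (y j) with hz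
  rw [tupleJ_update]
  set A := Function.update v (pr2 n k 0) z with hA
  have hJz : J z = J (y k) + (starRingEnd ℂ) c • J (y j) + (-((starRingEnd ℂ) d)) • y j := by
    rw [hz, hJadd, hJadd, hJsmul, hJsmul, hJJ, smul_neg, ← neg_smul]
  rw [hJz]
  rw [sform_add B hBa1 hBa2 n A (pr2 n k 1) (J (y k) + (starRingEnd ℂ) c • J (y j))
    ((-((starRingEnd ℂ) d)) • y j)]
  rw [sform_add B hBa1 hBa2 n A (pr2 n k 1) (J (y k)) ((starRingEnd ℂ) c • J (y j))]
  rw [sform_smul B hBs1 hBs2 n A (pr2 n k 1) ((starRingEnd ℂ) c) (J (y j))]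
  rw [sform_smul B hBs1 hBs2 n A (pr2 n k 1) (-((starRingEnd ℂ) d)) (y j)]
  have hz1 : Sform B n (Function.update A (pr2 n k 1) (J (y j))) = 0 := by
    apply sform_zero_of_eq B n _ (pr2 n k 1) (pr2 n j 1) (pr2_ne n (by omega))
    rw [Function.update_self, Function.update_of_ne (pr2_ne n (by omega)),
      hA, Function.update_of_ne (pr2_ne n (by omega)), hv, tupleJ_pr1]
  have hz2 : Sform B n (Function.update A (pr2 n k 1) (y j)) = 0 := by
    apply sform_zero_of_eq B n _ (pr2 n k 1) (pr2 n j 0) (pr2_ne n (by omega))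
    rw [Function.update_self, Function.update_of_ne (pr2_ne n (by omega)),
      hA, Function.update_of_ne (pr2_ne n (by omega)), hv, tupleJ_pr0]
  rw [hz1, hz2, mul_zero, mul_zero, add_zero, add_zero]
  have hcollapse : Function.update A (pr2 n k 1) (J (y k)) = Function.update v (pr2 n k 0) z := by
    rw [hA, Function.update_comm (pr2_ne n (by omega))]
    congr 1
    have hvk : v (pr2 n k 1) = J (y k) := tupleJ_pr1 J n y k
    rw [← hvk, Function.update_eq_self]
  rw [hcollapse, hz]
  rw [sform_add B hBa1 hBa2 n v (pr2 n k 0) (y k + c • y j) (d • J (y j))]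
  rw [sform_add B hBa1 hBa2 n v (pr2 n k 0) (y k) (c • y j)]
  rw [sform_smul B hBs1 hBs2 n v (pr2 n k 0) c (y j)]
  rw [sform_smul B hBs1 hBs2 n v (pr2 n k 0) d (J (y j))]
  have hz3 : Sform B n (Function.update v (pr2 n k 0) (y j)) = 0 := by
    apply sform_zero_of_eq B n _ (pr2 n k 0) (pr2 n j 0) (pr2_ne n (by omega))
    rw [Function.update_self, Function.update_of_ne (pr2_ne n (by omega)), hv, tupleJ_pr0]
  have hz4 : Sform B n (Function.update v (pr2 n k 0) (J (y j))) = 0 := by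
    apply sform_zero_of_eq B n _ (pr2 n k 0) (pr2 n j 1) (pr2_ne n (by omega))
    rw [Function.update_self, Function.update_of_ne (pr2_ne n (by omega)), hv, tupleJ_pr1]
  rw [hz3, hz4, mul_zero, mul_zero, add_zero, add_zero]
  have : Function.update v (pr2 n k 0) (y k) = v := by
    have hvk : v (pr2 n k 0) = y k := tupleJ_pr0 J n y k
    rw [← hvk, Function.update_eq_self]
  rw [this]

include hBa1 hBa2 hBs1 hBs2 hJadd hJsmul hJJ in
lemma sform_gs (n : ℕ) (y : Fin n → V) (k : Fin n) (c d : Fin n → ℂ)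
    (S : Finset (Fin n)) (hkS : k ∉ S) :
    Sform B n (tupleJ J n (Function.update y k
        (y k - ∑ t ∈ S, (c t • y t + d t • J (y t)))))
      = Sform B n (tupleJ J n y) := by
  classical
  induction S using Finset.induction_on with
  | empty =>
    rw [Finset.sum_empty, sub_zero, Function.update_eq_self]
  | @insert j S hjS ih =>
    have hjk : j ≠ k := fun hh => hkS (hh ▸ Finset.mem_insert_self j S)
    have hkS' : k ∉ S := fun hh => hkS (Finset.mem_insert_of_mem hh)
    rw [Finset.sum_insert hjS]
    have hE : y k - (c j • y j + d j • J (y j) + ∑ t ∈ S, (c t • y t + d t • J (y t)))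
        = (y k - ∑ t ∈ S, (c t • y t + d t • J (y t)))
          + (-(c j)) • y j + (-(d j)) • J (y j) := by
      simp only [neg_smul]
      abel
    rw [hE]
    set y' := Function.update y k (y k - ∑ t ∈ S, (c t • y t + d t • J (y t))) with hy'
    have h1 : Function.update y k
        ((y k - ∑ t ∈ S, (c t • y t + d t • J (y t))) + (-(c j)) • y j + (-(d j)) • J (y j))
        = Function.update y' k (y' k + (-(c j)) • y' j + (-(d j)) • J (y' j)) := by
      rw [hy', Function.update_idem, Function.update_self, Function.update_of_ne hjk]
    rw [h1, sform_elementary B hBa1 hBa2 hBs1 hBs2 J hJadd hJsmul hJJ n y' k j hjk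
      (-(c j)) (-(d j))]
    exact ih hkS'

end Elem

theorem omega_pow_eval_and_weakly_positive
    (V : Type*) [AddCommGroup V] [Module ℂ V] [FiniteDimensional ℂ V]
    (n : ℕ) (hdim : Module.finrank ℂ V = 2 * n)
    (J : V → V)
    (hJadd : ∀ x y, J (x + y) = J x + J y)
    (hJsmul : ∀ (c : ℂ) x, J (c • x) = (starRingEnd ℂ) c • J x)
    (hJJ : ∀ x, J (J x) = -x)
    -- the quaternionic Hermitian metric, as a Hermitian form on the (1,0)-space:
    (h : V → V → ℂ)
    (hherm : ∀ x y, (starRingEnd ℂ) (h x y) = h y x)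
    (hlin : ∀ (c : ℂ) x x' y, h (c • x + x') y = c * h x y + h x' y)
    (hposdef : ∀ x : V, x ≠ 0 → 0 < (h x x).re)
    (hJinv : ∀ x y, h (J x) (J y) = h y x)
    -- the associated standard (2,0)-form Ω = Σ ξ_i ∧ J(ξ̄_i):
    (Ω : (Fin 2 → V) → ℂ)
    (hΩ : ∀ v : Fin 2 → V, Ω v = -h (v 0) (J (v 1)))
    -- (1,0)-vectors, pairwise orthogonal with respect to the metric:
    (x : Fin n → V)
    (horth : ∀ i j, i ≠ j → h (x i) (x j) = 0 ∧ h (x i) (J (x j)) = 0) :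
    ((n.factorial : ℂ))⁻¹ * powFun V Ω n (tupleJ J n x) = ∏ i, h (x i) (x i)
    ∧ 0 ≤ (∏ i, h (x i) (x i)).re
    -- hence Ω^n is weakly positive:
    ∧ ∀ y : Fin n → V, 0 ≤ (powFun V Ω n (tupleJ J n y)).re
        ∧ (powFun V Ω n (tupleJ J n y)).im = 0 := by
  classical
  -- basic algebra of h
  have h0l : ∀ z, h 0 z = 0 := by
    intro z
    have e := hlin 1 0 0 z
    simp only [one_smul, add_zero, one_mul] at e
    linear_combination -e
  have haddl : ∀ a b z, h (a + b) z = h a z + h b z := by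
    intro a b z
    have e := hlin 1 a b z
    simpa using e
  have hsmull : ∀ (c : ℂ) a z, h (c • a) z = c * h a z := by
    intro c a z
    have e := hlin c a 0 z
    rw [add_zero, h0l, add_zero] at e
    exact e
  have hsubl : ∀ a b z, h (a - b) z = h a z - h b z := by
    intro a b z
    rw [sub_eq_add_neg, haddl, show -b = (-1 : ℂ) • b by simp, hsmull]
    ring
  have haddr : ∀ z a b, h z (a + b) = h z a + h z b := by
    intro z a b
    have e := congrArg (starRingEnd ℂ) (haddl a b z)
    rw [map_add, hherm, hherm, hherm] at e
    exact e
  have hsmulr : ∀ (c : ℂ) z a, h z (c • a) = (starRingEnd ℂ) c * h z a := by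
    intro c z a
    have e := congrArg (starRingEnd ℂ) (hsmull c a z)
    rw [map_mul, hherm, hherm] at e
    exact e
  have hnegr : ∀ z a, h z (-a) = - h z a := by
    intro z a
    rw [show -a = (-1 : ℂ) • a by simp, hsmulr]
    simp
  have hJself : ∀ a, h (J a) a = 0 := by
    intro a
    have e1 : h (J a) a = - h (J a) a := by
      calc h (J a) a = h (J a) (-(J (J a))) := by rw [hJJ, neg_neg]
      _ = - h (J a) (J (J a)) := hnegr _ _
      _ = - h (J a) a := by rw [hJinv]
    linear_combination e1 / 2
  have hJself' : ∀ a, h a (J a) = 0 := by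
    intro a
    have e := congrArg (starRingEnd ℂ) (hJself a)
    rw [hherm] at e
    simpa using e
  have homega : ∀ a b, h a (J b) = - h b (J a) := by
    intro a b
    calc h a (J b) = (starRingEnd ℂ) (h (J b) a) := (hherm _ _).symm
    _ = (starRingEnd ℂ) (h (J b) (-(J (J a)))) := by rw [hJJ, neg_neg]
    _ = (starRingEnd ℂ) (- h (J b) (J (J a))) := by rw [hnegr]
    _ = (starRingEnd ℂ) (- h (J a) b) := by rw [hJinv]
    _ = - (starRingEnd ℂ) (h (J a) b) := by rw [map_neg]
    _ = - h b (J a) := by rw [hherm]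
  have hselfreal : ∀ a, h a a = ((h a a).re : ℂ) :=
    fun a => (Complex.conj_eq_iff_re.mp (hherm a a)).symm
  have hselfnneg : ∀ a, 0 ≤ (h a a).re := by
    intro a
    by_cases ha : a = 0
    · subst ha; rw [h0l]; simp
    · exact (hposdef a ha).le
  have hselfne : ∀ a, a ≠ 0 → h a a ≠ 0 := by
    intro a ha h0
    have := hposdef a ha
    rw [h0] at this
    simp at this
  -- the bilinear form B
  set B : V → V → ℂ := fun a b => -(h a (J b)) with hB
  have hΩB : ∀ v : Fin 2 → V, Ω v = B (v 0) (v 1) := hΩ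
  have hBa1 : ∀ a a' b, B (a + a') b = B a b + B a' b := by
    intro a a' b
    simp only [hB]
    rw [haddl]
    ring
  have hBa2 : ∀ a b b', B a (b + b') = B a b + B a b' := by
    intro a b b'
    simp only [hB]
    rw [hJadd, haddr]
    ring
  have hBs1 : ∀ (c : ℂ) a b, B (c • a) b = c * B a b := by
    intro c a b
    simp only [hB]
    rw [hsmull]
    ring
  have hBs2 : ∀ (c : ℂ) a b, B a (c • b) = c * B a b := by
    intro c a b
    simp only [hB]
    rw [hJsmul, hsmulr, Complex.conj_conj]
    ring
  set N : (Fin n → V) → ℂ := fun y => Sform B n (tupleJ J n y) with hN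
  have hpow : ∀ y, powFun V Ω n (tupleJ J n y) = (((2 ^ n : ℕ) : ℂ))⁻¹ * N y :=
    fun y => powFun_eq_sform Ω B hΩB n (tupleJ J n y)
  have horthEval : ∀ y : Fin n → V,
      (∀ i j, i ≠ j → h (y i) (y j) = 0 ∧ h (y i) (J (y j)) = 0) →
      N y = ((2 ^ n * n.factorial : ℕ) : ℂ) * ∏ i, h (y i) (y i) := by
    intro y hy
    refine sform_orth B n (tupleJ J n y) (fun i => h (y i) (y i)) ?_ ?_ ?_
    · intro a b hcond
      obtain ⟨ia, ja, rfl⟩ : ∃ i j, pr2 n i j = a :=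
        ⟨⟨a.val / 2, by have := a.isLt; omega⟩, ⟨a.val % 2, by omega⟩,
          Fin.ext (by show 2 * (a.val / 2) + a.val % 2 = a.val; omega)⟩
      obtain ⟨ib, jb, rfl⟩ : ∃ i j, pr2 n i j = b :=
        ⟨⟨b.val / 2, by have := b.isLt; omega⟩, ⟨b.val % 2, by omega⟩,
          Fin.ext (by show 2 * (b.val / 2) + b.val % 2 = b.val; omega)⟩
      have hja := ja.isLt
      have hjb := jb.isLt
      have hcond' : (ia.val ≠ ib.val ∨ ja.val = jb.val) := by
        rcases hcond with hc | hc
        · left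
          intro hh
          exact hc (by show (2 * ia.val + ja.val) / 2 = (2 * ib.val + jb.val) / 2; omega)
        · right
          have : (2 * ia.val + ja.val) % 2 = (2 * ib.val + jb.val) % 2 := hc
          omega
      rcases (by omega : ja.val = 0 ∨ ja.val = 1) with hja0 | hja0 <;>
        rcases (by omega : jb.val = 0 ∨ jb.val = 1) with hjb0 | hjb0
      · rw [show ja = 0 from Fin.ext hja0, show jb = 0 from Fin.ext hjb0,
          tupleJ_pr0, tupleJ_pr0]
        by_cases hii : ia = ib
        · subst hii
          simp only [hB]
          rw [hJself']
          simp
        · simp only [hB]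
          rw [(hy ia ib hii).2]
          simp
      · rw [show ja = 0 from Fin.ext hja0, show jb = 1 from Fin.ext hjb0,
          tupleJ_pr0, tupleJ_pr1]
        have hii : ia ≠ ib := by
          rcases hcond' with hc | hc
          · exact fun hh => hc (congrArg Fin.val hh)
          · omega
        simp only [hB]
        rw [hJJ, hnegr, (hy ia ib hii).1]
        simp
      · rw [show ja = 1 from Fin.ext hja0, show jb = 0 from Fin.ext hjb0,
          tupleJ_pr1, tupleJ_pr0]
        have hii : ia ≠ ib := by
          rcases hcond' with hc | hc
          · exact fun hh => hc (congrArg Fin.val hh)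
          · omega
        simp only [hB]
        rw [hJinv, (hy ib ia (Ne.symm hii)).1]
        simp
      · rw [show ja = 1 from Fin.ext hja0, show jb = 1 from Fin.ext hjb0,
          tupleJ_pr1, tupleJ_pr1]
        simp only [hB]
        rw [hJinv]
        rw [← hherm]
        by_cases hii : ia = ib
        · subst hii
          rw [hJself']
          simp
        · rw [(hy ia ib hii).2]
          simp
    · intro i
      rw [tupleJ_pr0, tupleJ_pr1]
      simp only [hB]
      rw [hJJ, hnegr]
      ring
    · intro i
      rw [tupleJ_pr0, tupleJ_pr1]
      simp only [hB]
      rw [hJinv]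
  have hprodreal : ∀ y : Fin n → V,
      (∏ i, h (y i) (y i)) = (((∏ i, (h (y i) (y i)).re : ℝ)) : ℂ) := by
    intro y
    rw [Complex.ofReal_prod]
    exact Finset.prod_congr rfl (fun i _ => hselfreal (y i))
  have hprodnneg : ∀ y : Fin n → V, (0:ℝ) ≤ ∏ i, (h (y i) (y i)).re :=
    fun y => Finset.prod_nonneg (fun i _ => hselfnneg (y i))
  have hfacne : ((n.factorial : ℕ) : ℂ) ≠ 0 := Nat.cast_ne_zero.mpr (Nat.factorial_ne_zero n)
  have h2ne : ((2 : ℂ)) ^ n ≠ 0 := pow_ne_zero n two_ne_zero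
  refine ⟨?_, ?_, ?_⟩
  · rw [hpow x, horthEval x horth]
    push_cast
    field_simp
  · rw [hprodreal x, Complex.ofReal_re]
    exact hprodnneg x
  · -- weak positivity
    set P : ℕ → Prop := fun k => ∀ y : Fin n → V,
      (∀ i j : Fin n, i.val < k → j.val < k → i ≠ j →
        h (y i) (y j) = 0 ∧ h (y i) (J (y j)) = 0) →
      0 ≤ (N y).re ∧ (N y).im = 0 with hP
    have hPn : P n := by
      intro y hy
      rw [horthEval y (fun i j hij => hy i j i.isLt j.isLt hij), hprodreal y]
      have hcast : (((2 ^ n * n.factorial : ℕ) : ℂ)) * (((∏ i, (h (y i) (y i)).re : ℝ)) : ℂ)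
          = ((((2 ^ n * n.factorial : ℕ) : ℝ) * (∏ i, (h (y i) (y i)).re) : ℝ) : ℂ) := by
        push_cast
        ring
      rw [hcast]
      constructor
      · rw [Complex.ofReal_re]
        exact mul_nonneg (by positivity) (hprodnneg y)
      · rw [Complex.ofReal_im]
    have hstep : ∀ k : ℕ, P (k + 1) → P k := by
      intro k hP1 y hy
      by_cases hkn : k < n
      · set k' : Fin n := ⟨k, hkn⟩ with hk'
        by_cases hzero : ∃ j : Fin n, j.val < k ∧ y j = 0
        · obtain ⟨j0, hj0k, hj0⟩ := hzero
          have hNy : N y = 0 := by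
            show Sform B n (tupleJ J n y) = 0
            have hv0 : tupleJ J n y (pr2 n j0 0) = (0 : ℂ) • (0 : V) := by
              rw [tupleJ_pr0, hj0]
              simp
            have hupd : tupleJ J n y
                = Function.update (tupleJ J n y) (pr2 n j0 0) ((0 : ℂ) • (0 : V)) := by
              rw [← hv0, Function.update_eq_self]
            rw [hupd, sform_smul B hBs1 hBs2, zero_mul]
          rw [hNy]
          simp
        · push_neg at hzero
          set S : Finset (Fin n) := Finset.univ.filter (fun j => j.val < k) with hS
          have hkS : k' ∉ S := by simp [hS, hk']
          set c : Fin n → ℂ := fun j => h (y k') (y j) / h (y j) (y j) with hc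
          set d : Fin n → ℂ := fun j => h (y k') (J (y j)) / h (y j) (y j) with hd
          set y' := Function.update y k' (y k' - ∑ t ∈ S, (c t • y t + d t • J (y t))) with hy'
          have hNeq : N y' = N y :=
            sform_gs B hBa1 hBa2 hBs1 hBs2 J hJadd hJsmul hJJ n y k' c d S hkS
          have hy'mem : ∀ j : Fin n, j ≠ k' → y' j = y j :=
            fun j hj => Function.update_of_ne hj _ _
          have hy'k : y' k' = y k' - ∑ t ∈ S, (c t • y t + d t • J (y t)) :=
            Function.update_self _ _ _
          have hmain : ∀ j0 : Fin n, j0.val < k →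
              h (y' k') (y j0) = 0 ∧ h (y' k') (J (y j0)) = 0 := by
            intro j0 hj0
            have hj0ne : j0 ≠ k' := fun hh => by
              rw [hh] at hj0
              exact absurd hj0 (lt_irrefl k)
            have hj0S : j0 ∈ S := by simp [hS, hj0]
            have hyj0ne : h (y j0) (y j0) ≠ 0 := hselfne _ (hzero j0 hj0)
            have hexp : ∀ z : V, h (y' k') z
                = h (y k') z - ∑ t ∈ S, (c t * h (y t) z + d t * h (J (y t)) z) := by
              intro z
              rw [hy'k, hsubl]
              congr 1
              rw [show h (∑ t ∈ S, (c t • y t + d t • J (y t))) z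
                  = ∑ t ∈ S, h (c t • y t + d t • J (y t)) z from
                map_sum (AddMonoidHom.mk' (fun a => h a z) (fun a b => haddl a b z))
                  (fun t => c t • y t + d t • J (y t)) S]
              apply Finset.sum_congr rfl
              intro t _
              show h (c t • y t + d t • J (y t)) z = _
              rw [haddl, hsmull, hsmull]
            constructor
            · rw [hexp]
              rw [Finset.sum_eq_single j0 ?_ (fun hh => absurd hj0S hh)]
              · rw [hJself, mul_zero, add_zero, hc]
                field_simp
                simp
              · intro t htS htj
                have htk : t.val < k := by
                  have := htS
                  rw [hS] at this
                  simpa using this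
                have h1 : h (y t) (y j0) = 0 := (hy t j0 htk hj0 htj).1
                have h2 : h (J (y t)) (y j0) = 0 := by
                  have e := hherm (y j0) (J (y t))
                  rw [(hy j0 t hj0 htk (Ne.symm htj)).2] at e
                  rw [← e]
                  simp
                rw [h1, h2, mul_zero, mul_zero, add_zero]
            · rw [hexp]
              rw [Finset.sum_eq_single j0 ?_ (fun hh => absurd hj0S hh)]
              · rw [hJself', mul_zero, zero_add, hJinv, hd]
                field_simp
                simp
              · intro t htS htj
                have htk : t.val < k := by
                  have := htS
                  rw [hS] at this
                  simpa using this
                have h1 : h (y t) (J (y j0)) = 0 := (hy t j0 htk hj0 htj).2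
                have h2 : h (J (y t)) (J (y j0)) = 0 := by
                  rw [hJinv]
                  exact (hy j0 t hj0 htk (Ne.symm htj)).1
                rw [h1, h2, mul_zero, mul_zero, add_zero]
          have horth' : ∀ i j : Fin n, i.val < k + 1 → j.val < k + 1 → i ≠ j →
              h (y' i) (y' j) = 0 ∧ h (y' i) (J (y' j)) = 0 := by
            intro i j hi hj hij
            rcases (by omega : i.val < k ∨ i.val = k) with hik | hik <;>
              rcases (by omega : j.val < k ∨ j.val = k) with hjk | hjk
            · have hine : i ≠ k' := fun hh => by rw [hh] at hik; exact absurd hik (lt_irrefl k)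
              have hjne : j ≠ k' := fun hh => by rw [hh] at hjk; exact absurd hjk (lt_irrefl k)
              rw [hy'mem i hine, hy'mem j hjne]
              exact hy i j hik hjk hij
            · have hine : i ≠ k' := fun hh => by rw [hh] at hik; exact absurd hik (lt_irrefl k)
              have hjeq : j = k' := Fin.ext hjk
              rw [hjeq, hy'mem i hine]
              constructor
              · have e := hherm (y' k') (y i)
                rw [(hmain i hik).1] at e
                rw [← e]
                simp
              · rw [homega, (hmain i hik).2]
                simp
            · have hieq : i = k' := Fin.ext hik
              have hjne : j ≠ k' := fun hh => by rw [hh] at hjk; exact absurd hjk (lt_irrefl k)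
              rw [hieq, hy'mem j hjne]
              exact hmain j hjk
            · exact absurd (Fin.ext (hik.trans hjk.symm) : i = j) hij
          have := hP1 y' horth'
          rwa [hNeq] at this
      · push_neg at hkn
        exact hP1 y (fun i j _ _ hij =>
          hy i j (lt_of_lt_of_le i.isLt hkn) (lt_of_lt_of_le j.isLt hkn) hij)
    have hP0 : P 0 := by
      have key : ∀ m : ℕ, P (n - m) := by
        intro m
        induction m with
        | zero => simpa using hPn
        | succ m ih =>
          by_cases hmn : m < n
          · have h1 : n - (m + 1) + 1 = n - m := by omega
            exact hstep _ (by rw [h1]; exact ih)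
          · rw [show n - (m + 1) = n - m from by omega]
            exact ih
      have := key n
      simpa [Nat.sub_self] using this
    intro y
    obtain ⟨h1, h2⟩ := hP0 y (fun i j hi _ _ => absurd hi (Nat.not_lt_zero _))
    rw [hpow y]
    have hNre : N y = (((N y).re : ℝ) : ℂ) := by
      apply Complex.ext
      · simp
      · simp [h2]
    rw [hNre]
    have hcast : (((2 ^ n : ℕ) : ℂ))⁻¹ * (((N y).re : ℝ) : ℂ)
        = (((((2 : ℝ) ^ n)⁻¹ * (N y).re : ℝ)) : ℂ) := by
      push_cast
      ring
    rw [hcast]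
    constructor
    · rw [Complex.ofReal_re]
      exact mul_nonneg (by positivity) h1
    · rw [Complex.ofReal_im]
end
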